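/- There exists an edge-coloring of the complete graph on the positive integers that contains a rainbow k-cycle for every integer k ≥ 3 with k ≢ 2 (mod 4), but contains no rainbow cycle whose length is congruent to 2 modulo 4. -/

import Mathlib

/-- A rainbow cycle: `n` pairwise distinct vertices (given as an injective map
`v : Fin n → V`) such that the `n` edge colors `col (v i) (v (i+1))`
(indices cyclic mod `n`) are pairwise distinct. -/
def IsRainbowCycle {V C : Type*} {n : ℕ} (col : V → V → C) (v : Fin n → V) : Prop :=
  Function.Injective v ∧
    Function.Injective (fun i : Fin n =>
      col (v i) (v ⟨(i.val + 1) % n, Nat.mod_lt _ i.pos⟩))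

/-- An edge-coloring `col` contains a rainbow `n`-cycle. -/
def ContainsRainbowCycle {V C : Type*} (col : V → V → C) (n : ℕ) : Prop :=
  ∃ v : Fin n → V, IsRainbowCycle col v

namespace RainbowAux

/-- residue of a positive integer mod 4 -/
def r (x : ℕ+) : ZMod 4 := ((x : ℕ) : ZMod 4)

/-- The coloring: if `y ≡ x + 1 (mod 4)` color by `x`; if `x ≡ y + 1 (mod 4)` color
by `y`; otherwise one global color `none`. -/
def mycol (x y : ℕ+) : Option ℕ+ :=
  if r y = r x + 1 then some x else if r x = r y + 1 then some y else none

lemma not_both (x y : ℕ+) : ¬ (r y = r x + 1 ∧ r x = r y + 1) := by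
  rintro ⟨h1, h2⟩
  rw [h2, add_assoc] at h1
  have h3 : (1 + 1 : ZMod 4) = 0 := left_eq_add.mp h1
  exact absurd h3 (by decide)

lemma mycol_symm (x y : ℕ+) : mycol x y = mycol y x := by
  unfold mycol
  by_cases h1 : r y = r x + 1
  · have h2 : ¬ (r x = r y + 1) := fun h2 => not_both x y ⟨h1, h2⟩
    rw [if_pos h1, if_neg h2, if_pos h1]
  · by_cases h2 : r x = r y + 1
    · rw [if_neg h1, if_pos h2, if_pos h2]
    · rw [if_neg h1, if_neg h2, if_neg h2, if_neg h1]

lemma cast_mod4 (k : ℕ) : ((k : ℕ) : ZMod 4) = ((k % 4 : ℕ) : ZMod 4) :=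
  (ZMod.natCast_mod k 4).symm

lemma fin_succ_eq {n : ℕ} [NeZero n] (hn : 3 ≤ n) (i : Fin n) :
    (⟨(i.val + 1) % n, Nat.mod_lt _ i.pos⟩ : Fin n) = i + 1 := by
  apply Fin.ext
  show (i.val + 1) % n = ((i + 1 : Fin n)).val
  rw [Fin.val_add, Fin.val_one', Nat.mod_eq_of_lt (show 1 < n by omega)]

lemma fin_ne_add_one {n : ℕ} [NeZero n] (hn : 3 ≤ n) (i : Fin n) : i ≠ i + 1 := by
  intro h
  have h' := congrArg (fun j : Fin n => j - i) h
  simp only [sub_self, add_sub_cancel_left] at h'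
  have h'' := congrArg Fin.val h'
  rw [Fin.val_one', Fin.val_zero, Nat.mod_eq_of_lt (show 1 < n by omega)] at h''
  omega

end RainbowAux

open RainbowAux Fin.NatCast in
/-- There is a symmetric edge-coloring of the complete graph on the positive integers
containing rainbow `k`-cycles for all `k ≥ 3` with `k ≢ 2 (mod 4)`, but containing no
rainbow cycle of length `≡ 2 (mod 4)`. -/
theorem exists_coloring_not_two_mod_four : ∃ (C : Type) (col : ℕ+ → ℕ+ → C),
    (∀ x y, col x y = col y x) ∧
    (∀ k : ℕ, 3 ≤ k → k % 4 ≠ 2 → ContainsRainbowCycle col k) ∧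
    (∀ k : ℕ, 3 ≤ k → k % 4 = 2 → ¬ ContainsRainbowCycle col k) := by
  refine ⟨Option ℕ+, mycol, mycol_symm, ?_, ?_⟩
  · -- existence
    intro k hk3 hk2
    haveI : NeZero k := ⟨by omega⟩
    set v : Fin k → ℕ+ := fun i => ⟨i.val + 1, Nat.succ_pos _⟩ with hv
    have vinj : Function.Injective v := by
      intro a b hab
      have : a.val + 1 = b.val + 1 := congrArg (fun (x : ℕ+) => (x : ℕ)) hab
      exact Fin.ext (by omega)
    refine ⟨v, vinj, ?_⟩
    have hf : ∀ i : Fin k,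
        mycol (v i) (v ⟨(i.val + 1) % k, Nat.mod_lt _ i.pos⟩)
          = if i.val + 1 = k ∧ k % 4 ≠ 0 then none else some (v i) := by
      intro i
      have hvival : ((v i : ℕ+) : ℕ) = i.val + 1 := rfl
      by_cases hlast : i.val + 1 = k
      · have hidx : (i.val + 1) % k = 0 := by rw [hlast, Nat.mod_self]
        have hv2 : (v ⟨(i.val + 1) % k, Nat.mod_lt _ i.pos⟩ : ℕ+) = ⟨1, one_pos⟩ := by
          simp [hv, hidx]
        rw [hv2]
        have hr1 : r ⟨1, one_pos⟩ = 1 := by simp [r]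
        have hrv : r (v i) = ((k : ℕ) : ZMod 4) := by
          unfold r
          rw [hvival, hlast]
        have hm : k % 4 = 0 ∨ k % 4 = 1 ∨ k % 4 = 3 := by omega
        unfold mycol
        rcases hm with hm | hm | hm
        · have hk0 : ((k : ℕ) : ZMod 4) = 0 := by rw [cast_mod4, hm]; norm_num
          rw [if_pos (by rw [hr1, hrv, hk0]; decide)]
          simp [hlast, hm]
        · have hk0 : ((k : ℕ) : ZMod 4) = 1 := by rw [cast_mod4, hm]; norm_num
          rw [if_neg (by rw [hr1, hrv, hk0]; decide),
              if_neg (by rw [hr1, hrv, hk0]; decide)]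
          simp [hlast, hm]
        · have hk0 : ((k : ℕ) : ZMod 4) = 3 := by rw [cast_mod4, hm]; norm_num
          rw [if_neg (by rw [hr1, hrv, hk0]; decide),
              if_neg (by rw [hr1, hrv, hk0]; decide)]
          simp [hlast, hm]
      · have hlt : i.val + 1 < k := lt_of_le_of_ne (Nat.succ_le_of_lt i.isLt) hlast
        have hidx : (i.val + 1) % k = i.val + 1 := Nat.mod_eq_of_lt hlt
        have hv2 : (v ⟨(i.val + 1) % k, Nat.mod_lt _ i.pos⟩ : ℕ+)
            = ⟨i.val + 2, by omega⟩ := by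
          simp [hv, hidx]; rfl
        rw [hv2]
        have hcond : r ⟨i.val + 2, by omega⟩ = r (v i) + 1 := by
          unfold r
          rw [hvival]
          show ((i.val + 2 : ℕ) : ZMod 4) = ((i.val + 1 : ℕ) : ZMod 4) + 1
          push_cast
          ring
        unfold mycol
        rw [if_pos hcond]
        simp [hlast]
    intro i j hij
    simp only [hf i, hf j] at hij
    by_cases h1 : i.val + 1 = k ∧ k % 4 ≠ 0
    · by_cases h2 : j.val + 1 = k ∧ k % 4 ≠ 0
      · obtain ⟨h1a, -⟩ := h1
        obtain ⟨h2a, -⟩ := h2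
        exact Fin.ext (by omega)
      · rw [if_pos h1, if_neg h2] at hij
        cases hij
    · by_cases h2 : j.val + 1 = k ∧ k % 4 ≠ 0
      · rw [if_neg h1, if_pos h2] at hij
        cases hij
      · rw [if_neg h1, if_neg h2] at hij
        exact vinj (Option.some_injective _ hij)
  · -- impossibility
    intro k hk3 hk2 hcontain
    obtain ⟨v, hvinj, hcinj⟩ := hcontain
    haveI : NeZero k := ⟨by omega⟩
    have hfun : (fun i : Fin k => mycol (v i) (v ⟨(i.val + 1) % k, Nat.mod_lt _ i.pos⟩))
        = fun i => mycol (v i) (v (i + 1)) := funext fun i => by rw [fin_succ_eq hk3]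
    rw [hfun] at hcinj
    have hcinj' : ∀ i j : Fin k,
        mycol (v i) (v (i + 1)) = mycol (v j) (v (j + 1)) → i = j := fun i j h => hcinj h
    set c : Fin k → Option ℕ+ := fun i => mycol (v i) (v (i + 1)) with hc
    set d : Fin k → ZMod 4 := fun i => r (v (i + 1)) - r (v i) with hd
    have hcdef : ∀ i, c i = mycol (v i) (v (i + 1)) := fun i => rfl
    have hddef : ∀ i, d i = r (v (i + 1)) - r (v i) := fun i => rfl
    have htel : ∑ i, d i = 0 := by
      have h1 : ∑ i : Fin k, r (v (i + 1)) = ∑ i : Fin k, r (v i) :=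
        Fintype.sum_equiv (Equiv.addRight 1) _ _ (fun i => rfl)
      simp only [hd]
      rw [Finset.sum_sub_distrib, h1, sub_self]
    have hk4 : ((k : ℕ) : ZMod 4) = 2 := by rw [cast_mod4, hk2]; norm_num
    have hedge : ∀ i, (c i = some (v i) ∧ d i = 1)
        ∨ (c i = some (v (i + 1)) ∧ d i = -1)
        ∨ (c i = none ∧ 2 * d i = 0) := by
      intro i
      by_cases h1 : r (v (i + 1)) = r (v i) + 1
      · refine Or.inl ⟨?_, ?_⟩
        · rw [hcdef]; unfold mycol; rw [if_pos h1]
        · rw [hddef, h1]; ring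
      · by_cases h2 : r (v i) = r (v (i + 1)) + 1
        · refine Or.inr (Or.inl ⟨?_, ?_⟩)
          · rw [hcdef]; unfold mycol; rw [if_neg h1, if_pos h2]
          · rw [hddef, h2]; ring
        · refine Or.inr (Or.inr ⟨?_, ?_⟩)
          · rw [hcdef]; unfold mycol; rw [if_neg h1, if_neg h2]
          · have hd1 : d i ≠ 1 := by
              intro h
              rw [hddef] at h
              exact h1 (by linear_combination h)
            have hd2 : d i ≠ -1 := by
              intro h
              rw [hddef] at h
              exact h2 (by linear_combination -h)
            revert hd1 hd2
            generalize d i = z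
            revert z
            decide
    by_cases hnone : ∃ i₀, c i₀ = none
    · obtain ⟨i₀, h0⟩ := hnone
      have hterm : ∀ j, 2 * d j = if j = i₀ then 0 else 2 := by
        intro j
        rcases hedge j with ⟨hc1, hd1⟩ | ⟨hc1, hd1⟩ | ⟨hc1, hd1⟩
        · have hj : j ≠ i₀ := by intro h; rw [h, h0] at hc1; cases hc1
          rw [if_neg hj, hd1]; decide
        · have hj : j ≠ i₀ := by intro h; rw [h, h0] at hc1; cases hc1
          rw [if_neg hj, hd1]; decide
        · have hj : j = i₀ := hcinj' _ _ (hc1.trans h0.symm)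
          rw [if_pos hj, hd1]
      have hsum : ∑ j, 2 * d j = 0 := by rw [← Finset.mul_sum, htel, mul_zero]
      rw [Finset.sum_congr rfl (fun j _ => hterm j)] at hsum
      have hsplit : ∀ j : Fin k, (if j = i₀ then (0 : ZMod 4) else 2)
          = 2 - (if j = i₀ then 2 else 0) := by
        intro j; split_ifs <;> ring
      rw [Finset.sum_congr rfl (fun j _ => hsplit j), Finset.sum_sub_distrib,
        Finset.sum_const, Finset.sum_ite_eq' Finset.univ i₀ (fun _ => (2 : ZMod 4))] at hsum
      simp only [Finset.mem_univ, if_pos, Finset.card_univ, Fintype.card_fin,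
        nsmul_eq_mul, hk4] at hsum
      exact absurd hsum (by decide)
    · push_neg at hnone
      have hAB : ∀ i, (c i = some (v i) ∧ d i = 1)
          ∨ (c i = some (v (i + 1)) ∧ d i = -1) := by
        intro i
        rcases hedge i with h | h | h
        · exact Or.inl h
        · exact Or.inr h
        · exact absurd h.1 (hnone i)
      have hstep : ∀ i, (c i = some (v (i + 1)) ∧ d i = -1)
          → (c (i + 1) = some (v (i + 1 + 1)) ∧ d (i + 1) = -1) := by
        intro i hB
        rcases hAB (i + 1) with hA | h
        · exfalso
          have heq : c i = c (i + 1) := by rw [hB.1, hA.1]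
          exact fin_ne_add_one hk3 i (hcinj' _ _ heq)
        · exact h
      by_cases hallA : ∀ i, d i = 1
      · rw [Finset.sum_congr rfl (fun j _ => hallA j), Finset.sum_const,
          Finset.card_univ, Fintype.card_fin, nsmul_eq_mul, hk4] at htel
        exact absurd htel (by decide)
      · push_neg at hallA
        obtain ⟨i₁, hi₁⟩ := hallA
        have hB₁ : c i₁ = some (v (i₁ + 1)) ∧ d i₁ = -1 := by
          rcases hAB i₁ with h | h
          · exact absurd h.2 hi₁
          · exact h
        have key : ∀ m : ℕ, c (i₁ + (m : Fin k)) = some (v (i₁ + (m : Fin k) + 1))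
            ∧ d (i₁ + (m : Fin k)) = -1 := by
          intro m
          induction m with
          | zero => simpa using hB₁
          | succ t ih =>
            have hcast : ((t + 1 : ℕ) : Fin k) = (t : Fin k) + 1 := by push_cast; ring
            rw [hcast, ← add_assoc]
            exact hstep _ ih
        have hallB : ∀ j, d j = -1 := by
          intro j
          have h := (key ((j - i₁).val)).2
          rwa [Fin.cast_val_eq_self, show i₁ + (j - i₁) = j by abel] at h
        rw [Finset.sum_congr rfl (fun j _ => hallB j), Finset.sum_const,
          Finset.card_univ, Fintype.card_fin, nsmul_eq_mul, hk4] at htel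
        exact absurd htel (by decide)
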